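/- There exist admissible ideals I and K on ℕ and a bounded real sequence (x_n) such that for some r > 0 the point −r is a rough I^K-limit of degree r of (x_n) but not a rough I*-limit of degree r of (x_n). Concretely: let A = odd numbers, A_i = {2^n(2i−1) : n ∈ ℕ}, I the ideal of subsets of ℕ meeting A and only finitely many A_i; let D_j = {2^{j−1}(2s−1) : s ∈ ℕ} and K the ideal of subsets meeting only finitely many D_j; define x_n = 1/j for n ∈ D_j. Then for every r > 0, −r is a rough I^K-limit of degree r but not a rough I*-limit of degree r of (x_n). -/

import Mathlib

/-- `I` is an ideal of subsets of ℕ: closed under finite unions and subsets. -/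
def IsIdeal (I : Set (Set ℕ)) : Prop :=
  (∀ A B : Set ℕ, A ∈ I → B ∈ I → A ∪ B ∈ I) ∧
  (∀ A B : Set ℕ, A ∈ I → B ⊆ A → B ∈ I)

/-- A nontrivial admissible ideal: an ideal containing all singletons, with ℕ ∉ I. -/
def IsAdmissibleIdeal (I : Set (Set ℕ)) : Prop :=
  IsIdeal I ∧ (∀ n : ℕ, ({n} : Set ℕ) ∈ I) ∧ (Set.univ : Set ℕ) ∉ I

/-- The subsequence of `x` over `M` rough converges to `l` of degree `r`:
for each ε > 0, ‖x m − l‖ < r + ε for all but finitely many m ∈ M. -/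
def RoughConvAlong {X : Type*} [NormedAddCommGroup X]
    (M : Set ℕ) (x : ℕ → X) (r : ℝ) (l : X) : Prop :=
  ∀ ε > (0:ℝ), {m ∈ M | r + ε ≤ ‖x m - l‖}.Finite

/-- Rough I-convergence of degree r to l. -/
def RoughIConv (I : Set (Set ℕ)) {X : Type*} [NormedAddCommGroup X]
    (x : ℕ → X) (r : ℝ) (l : X) : Prop :=
  ∀ ε > (0:ℝ), {n : ℕ | r + ε ≤ ‖x n - l‖} ∈ I

/-- Rough I*-convergence of degree r to l. -/
def RoughIStarConv (I : Set (Set ℕ)) {X : Type*} [NormedAddCommGroup X]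
    (x : ℕ → X) (r : ℝ) (l : X) : Prop :=
  ∃ M : Set ℕ, Mᶜ ∈ I ∧ RoughConvAlong M x r l

/-- The trace ideal K|M = {A ∩ M : A ∈ K}. -/
def traceIdeal (K : Set (Set ℕ)) (M : Set ℕ) : Set (Set ℕ) :=
  {A | ∃ B ∈ K, A = B ∩ M}

/-- Rough I^K-convergence of degree r to l: there is M with Mᶜ ∈ I such that the
set of indices of the subsequence over M lying outside the (r+ε)-ball belongs to K|M. -/
def RoughIKConv (I K : Set (Set ℕ)) {X : Type*} [NormedAddCommGroup X]
    (x : ℕ → X) (r : ℝ) (l : X) : Prop :=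
  ∃ M : Set ℕ, Mᶜ ∈ I ∧
    ∀ ε > (0:ℝ), {m ∈ M | r + ε ≤ ‖x m - l‖} ∈ traceIdeal K M

/-- The condition (AP) for an ideal I. -/
def APcond (I : Set (Set ℕ)) : Prop :=
  ∀ A : ℕ → Set ℕ, (∀ j, A j ∈ I) → (Pairwise (Function.onFun Disjoint A)) →
    ∃ B : ℕ → Set ℕ, (∀ j, B j ∈ I) ∧ (∀ j, (symmDiff (A j) (B j)).Finite) ∧
      (⋃ j, B j) ∈ I

/-- The condition AP(I,K). -/
def APIK (I K : Set (Set ℕ)) : Prop :=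
  ∀ A : ℕ → Set ℕ, (∀ j, A j ∈ I) → (Pairwise (Function.onFun Disjoint A)) →
    ∃ B : ℕ → Set ℕ, (∀ j, B j ∈ I) ∧ (∀ j, symmDiff (A j) (B j) ∈ K) ∧
      (⋃ j, B j) ∈ I

/-- `D j` (paper's `D_{j+1}`): naturals of the form `2^j * (odd)`,
i.e. positive naturals whose 2-adic valuation is exactly `j`. -/
def Dset (j : ℕ) : Set ℕ := {n | ∃ s : ℕ, n = 2 ^ j * (2 * s + 1)}

/-- `Aset i` (paper's `A_{i+1}`): numbers `2^k * (2i+1)` with `k ≥ 1`. -/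
def Aset (i : ℕ) : Set ℕ := {n | ∃ k : ℕ, 1 ≤ k ∧ n = 2 ^ k * (2 * i + 1)}

/-- The ideal `I` of the example: sets meeting only finitely many of the `Aset i`
(they may meet the odd numbers arbitrarily). -/
def idealI : Set (Set ℕ) := {S | {i : ℕ | (S ∩ Aset i).Nonempty}.Finite}

/-- The ideal `K` of the example: sets meeting only finitely many of the `Dset j`. -/
def idealK : Set (Set ℕ) := {S | {j : ℕ | (S ∩ Dset j).Nonempty}.Finite}

/-- The sequence of the example: `x n = 1/j` when `n ∈ D_j` (paper indexing),
i.e. `x n = 1/(ν₂(n) + 1)`. -/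
noncomputable def xseq (n : ℕ) : ℝ := 1 / (padicValNat 2 n + 1)


lemma genAdm (C : ℕ → Set ℕ) (hb : ∀ i n, n ∈ C i → i ≤ n) (hne : ∀ i, (C i).Nonempty) :
    IsAdmissibleIdeal {S | {i | (S ∩ C i).Nonempty}.Finite} := by
  refine ⟨⟨?_, ?_⟩, ?_, ?_⟩
  · intro A B hA hB
    refine (hA.union hB).subset ?_
    rintro i ⟨n, hn | hn, hnC⟩
    · exact Or.inl ⟨n, hn, hnC⟩
    · exact Or.inr ⟨n, hn, hnC⟩
  · intro A B hA hBA
    exact hA.subset fun i ⟨n, hnB, hnC⟩ => ⟨n, hBA hnB, hnC⟩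
  · intro n
    refine (Set.finite_Iic n).subset ?_
    rintro i ⟨m, hm, hmC⟩
    rcases hm with rfl
    exact hb i m hmC
  · intro h
    have he : {i | ((Set.univ : Set ℕ) ∩ C i).Nonempty} = Set.univ := by
      ext i; simpa using hne i
    rw [Set.mem_setOf_eq, he] at h
    exact Set.infinite_univ h

lemma Aset_bound : ∀ i n, n ∈ Aset i → i ≤ n := by
  rintro i n ⟨k, hk, rfl⟩
  have h2 : 2 ≤ 2 ^ k := by
    calc 2 = 2 ^ 1 := rfl
    _ ≤ 2 ^ k := Nat.pow_le_pow_right (by norm_num) hk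
  have := Nat.mul_le_mul_right (2 * i + 1) h2
  omega

lemma Aset_ne : ∀ i, (Aset i).Nonempty :=
  fun i => ⟨2 * (2 * i + 1), 1, le_refl 1, by ring⟩

lemma Dset_bound : ∀ j n, n ∈ Dset j → j ≤ n := by
  rintro j n ⟨s, rfl⟩
  have h1 : j < 2 ^ j := Nat.lt_two_pow_self (n := j)
  have h2 : 2 ^ j ≤ 2 ^ j * (2 * s + 1) := Nat.le_mul_of_pos_right _ (by omega)
  omega

lemma Dset_ne : ∀ j, (Dset j).Nonempty :=
  fun j => ⟨2 ^ j, 0, by ring⟩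

lemma padic_D {j n : ℕ} (h : n ∈ Dset j) : padicValNat 2 n = j := by
  obtain ⟨s, rfl⟩ := h
  haveI : Fact (Nat.Prime 2) := ⟨Nat.prime_two⟩
  have hodd : ¬ (2 ∣ (2 * s + 1)) := by omega
  rw [padicValNat.mul (by positivity) (by omega), padicValNat.prime_pow,
    padicValNat.eq_zero_of_not_dvd hodd]
  omega

lemma xseq_D {j n : ℕ} (h : n ∈ Dset j) : xseq n = 1 / ((j : ℝ) + 1) := by
  rw [xseq, padic_D h]

lemma xseq_pos (n : ℕ) : 0 < xseq n := by
  rw [xseq]; positivity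

lemma norm_iff {m : ℕ} {r ε : ℝ} (hr : 0 < r) :
    r + ε ≤ ‖xseq m - (-r)‖ ↔ ε ≤ xseq m := by
  have hx : 0 < xseq m := xseq_pos m
  rw [sub_neg_eq_add, Real.norm_eq_abs, abs_of_pos (by linarith)]
  constructor <;> intro <;> linarith


theorem stmt18 :
    IsAdmissibleIdeal idealI ∧ IsAdmissibleIdeal idealK ∧
    ∀ r : ℝ, 0 < r →
      RoughIKConv idealI idealK xseq r (-r) ∧
      ¬ RoughIStarConv idealI xseq r (-r) := by
  refine ⟨genAdm Aset Aset_bound Aset_ne, genAdm Dset Dset_bound Dset_ne, ?_⟩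
  intro r hr
  constructor
  · refine ⟨Set.univ, ?_, ?_⟩
    · show {i | ((Set.univ : Set ℕ)ᶜ ∩ Aset i).Nonempty}.Finite
      simp
    · intro ε hε
      refine ⟨{m ∈ Set.univ | r + ε ≤ ‖xseq m - (-r)‖}, ?_, (Set.inter_univ _).symm⟩
      show {j | _}.Finite
      refine (Set.finite_Iic ⌈1/ε⌉₊).subset ?_
      rintro j ⟨n, ⟨-, hn⟩, hnD⟩
      have h1 : ε ≤ 1 / ((j : ℝ) + 1) := by
        rw [← xseq_D hnD]; exact (norm_iff hr).mp hn
      have hj : (0:ℝ) < (j : ℝ) + 1 := by positivity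
      rw [le_div_iff₀ hj] at h1
      have h2 : (j : ℝ) ≤ 1 / ε := by
        rw [le_div_iff₀ hε]; nlinarith
      have : j ≤ ⌈1/ε⌉₊ := by
        calc j = ⌈((j : ℝ))⌉₊ := (Nat.ceil_natCast j).symm
        _ ≤ ⌈1/ε⌉₊ := Nat.ceil_mono h2
      exact this
  · rintro ⟨M, hMc, hconv⟩
    have hG : {i | ¬ Aset i ⊆ M}.Finite := by
      refine Set.Finite.subset hMc ?_
      intro i hi
      rw [Set.mem_setOf_eq, Set.not_subset] at hi
      obtain ⟨n, hn, hnM⟩ := hi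
      exact ⟨n, hnM, hn⟩
    have hinf : {i | Aset i ⊆ M}.Infinite := by
      have := hG.infinite_compl
      simpa [Set.compl_setOf] using this
    have hF := hconv (1/2) (by norm_num)
    have key : ∀ i ∈ {i | Aset i ⊆ M},
        2 * (2 * i + 1) ∈ {m ∈ M | r + 1/2 ≤ ‖xseq m - (-r)‖} := by
      intro i hi
      have hmem : 2 * (2 * i + 1) ∈ Aset i := ⟨1, le_refl 1, by ring⟩
      have hD : 2 * (2 * i + 1) ∈ Dset 1 := ⟨i, by ring⟩
      refine ⟨hi hmem, ?_⟩
      rw [norm_iff hr, xseq_D hD]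
      norm_num
    have himg : ((fun i => 2 * (2 * i + 1)) '' {i | Aset i ⊆ M}).Infinite :=
      hinf.image (fun a _ b _ h => by omega)
    refine (himg.mono ?_) hF
    rintro _ ⟨i, hi, rfl⟩
    exact key i hi
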